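/- Let n ≥ 1, m ≥ 0, and let P₁,…,P_n ∈ {0,1}^{m+1} be generator polynomials satisfying {z ∈ {1,…,n} : P_z.1 = 1} ≠ ∅. Define c : {0,1} × {0,1}^{≤m} → {0,1}^n by c(x, x₁…x_p) = (P₁[v],…,P_n[v]) where v = (x, x_p, x_{p−1}, …, x₁, 0,…,0) ∈ {0,1}^{m+1} and P_j[b₁…b_{m+1}] = ⊕_{z : P_j.z = 1} b_z. Then the homomorphic extension c̄ : {0,1}* → {0,1}* given by c̄(λ) = λ and c̄(x₁…x_t) = ∏_{i=1}^{t} c(x_i, x_{max(1,i−m)}…x_{i−1}) is injective; that is, the (n,1,m) convolutional code defined by P₁,…,P_n is an adaptive code of order m. -/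
import Mathlib

/-- The padded register vector `v = (x, x_p, x_{p-1}, …, x₁, 0, …, 0) ∈ {0,1}^{m+1}`
built from the current input bit `x` and the context `u = x₁x₂…x_p` (`p ≤ m`,
most recent bit last), padded with `m - p` zeros. -/
def convVec (m : ℕ) (x : ZMod 2) (u : List (ZMod 2)) : Fin (m + 1) → ZMod 2 :=
  fun k => if k.val = 0 then x else u.reverse.getD (k.val - 1) 0

/-- The encoding function of an `(n,1,m)` convolutional code with generator
polynomials `P 0, …, P (n-1)`: `c(x, x₁…x_p)` is the length-`n` string whose
`j`-th bit is `P_j[v] = ⊕_{z : P_j.z = 1} v_z`, the modulo-2 sum of the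
coordinates of `v` selected by `P_j`. -/
def convCode (n m : ℕ) (P : Fin n → Fin (m + 1) → ZMod 2)
    (x : ZMod 2) (u : List (ZMod 2)) : List (ZMod 2) :=
  (List.finRange n).map fun j => ∑ z : Fin (m + 1), P j z * convVec m x u z

/-- The homomorphic extension `c̄` of `c : Σ × Σ^{≤m} → Δ⁺`: the `i`-th
codeword is determined by the `i`-th symbol together with the (at most `m`)
immediately preceding symbols. -/
def adaptiveExt {S D : Type*} (c : S → List S → List D) (m : ℕ) (w : List S) : List D :=
  (List.finRange w.length).flatMap fun i => c (w.get i) ((w.take i).drop (i - m))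

lemma flatten_const_length_inj {β : Type*} {n : ℕ} (hn : 0 < n) :
    ∀ (l1 l2 : List (List β)), (∀ a ∈ l1, a.length = n) → (∀ a ∈ l2, a.length = n) →
      l1.flatten = l2.flatten → l1 = l2 := by
  intro l1
  induction l1 with
  | nil =>
    intro l2 _ h2 h
    cases l2 with
    | nil => rfl
    | cons b t =>
      exfalso
      have hb : b.length = n := h2 b (by simp)
      have : (List.flatten (b :: t)).length = 0 := by rw [← h]; simp
      simp [hb] at this
      omega
  | cons a t1 ih =>
    intro l2 h1 h2 h
    cases l2 with
    | nil =>
      exfalso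
      have ha : a.length = n := h1 a (by simp)
      have : (List.flatten (a :: t1)).length = 0 := by rw [h]; simp
      simp [ha] at this
      omega
    | cons b t2 =>
      simp only [List.flatten_cons] at h
      have hlen : a.length = b.length := by
        rw [h1 a (by simp), h2 b (by simp)]
      obtain ⟨hab, htail⟩ := List.append_inj h hlen
      have := ih t2 (fun x hx => h1 x (by simp [hx])) (fun x hx => h2 x (by simp [hx])) htail
      rw [hab, this]

/-- Any `(n,1,m)` convolutional code whose generator polynomials satisfy
`{z : P_z.1 = 1} ≠ ∅` is an adaptive code of order `m`: its homomorphic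
extension `c̄` is injective. -/
theorem convCode_is_adaptive_code (n m : ℕ) (hn : 1 ≤ n)
    (P : Fin n → Fin (m + 1) → ZMod 2)
    (hP : ∃ z : Fin n, P z 0 = 1) :
    Function.Injective (adaptiveExt (convCode n m P) m) := by
  obtain ⟨j0, hj0⟩ := hP
  intro w1 w2 h
  -- block lists
  have hlenblock : ∀ (x : ZMod 2) (u : List (ZMod 2)), (convCode n m P x u).length = n := by
    intro x u; simp [convCode]
  unfold adaptiveExt at h
  rw [List.flatMap_def, List.flatMap_def] at h
  -- lengths equal
  have hL : w1.length = w2.length := by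
    have := congrArg List.length h
    rw [List.length_flatten, List.length_flatten] at this
    simp only [List.map_map] at this
    have e1 : ∀ (w : List (ZMod 2)),
        (((List.finRange w.length).map fun i =>
          (convCode n m P (w.get i) ((w.take i).drop (i - m))).length)).sum
          = n * w.length := by
      intro w
      have : ((List.finRange w.length).map fun i =>
          (convCode n m P (w.get i) ((w.take i).drop (i - m))).length)
          = (List.finRange w.length).map fun _ => n := by
        apply List.map_congr_left
        intro i _; exact hlenblock _ _
      rw [this]
      simp [List.map_const', mul_comm]
    have t1 := e1 w1
    have t2 := e1 w2
    simp only [Function.comp_def] at this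
    rw [t1, t2] at this
    exact Nat.eq_of_mul_eq_mul_left (by omega) this
  -- blocks equal
  have hblocks := flatten_const_length_inj (n := n) (by omega) _ _
    (by intro a ha; simp only [List.mem_map] at ha; obtain ⟨i, _, rfl⟩ := ha; exact hlenblock _ _)
    (by intro a ha; simp only [List.mem_map] at ha; obtain ⟨i, _, rfl⟩ := ha; exact hlenblock _ _) h
  -- elementwise block equality
  have hblock : ∀ (i : ℕ) (hi1 : i < w1.length) (hi2 : i < w2.length),
      convCode n m P w1[i] ((w1.take i).drop (i - m)) =
      convCode n m P w2[i] ((w2.take i).drop (i - m)) := by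
    intro i hi1 hi2
    have := congrArg (fun l => l[i]?) hblocks
    simp only [List.getElem?_map] at this
    rw [List.getElem?_eq_getElem (by simpa using hi1),
        List.getElem?_eq_getElem (by simpa using hi2)] at this
    simp only [Option.map_some, Option.some.injEq, List.getElem_finRange] at this
    simpa using this
  -- strong induction on positions
  have key : ∀ i, ∀ (hi1 : i < w1.length), w1[i] = w2[i]'(hL ▸ hi1) := by
    intro i
    induction i using Nat.strong_induction_on with
    | _ i ih =>
      intro hi1
      have hi2 : i < w2.length := hL ▸ hi1
      have hctx : (w1.take i).drop (i - m) = (w2.take i).drop (i - m) := by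
        congr 1
        apply List.ext_getElem
        · simp [hL]
        · intro j hj1 hj2
          simp only [List.getElem_take]
          exact ih j (by simp at hj1; omega) _
      have hb := hblock i hi1 hi2
      rw [hctx] at hb
      -- extract component j0
      unfold convCode at hb
      have hbj := List.map_inj_left.mp hb j0 (List.mem_finRange j0)
      rw [Fin.sum_univ_succ, Fin.sum_univ_succ] at hbj
      simp only [convVec, Fin.val_zero, if_pos rfl, Fin.val_succ, if_true] at hbj
      rw [hj0, one_mul, one_mul] at hbj
      have : ∀ x : ZMod 2, ∀ u : List (ZMod 2),
          (∑ i : Fin m, P j0 i.succ * (if (i : ℕ) + 1 = 0 then x else u.reverse.getD ((i : ℕ) + 1 - 1) 0))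
          = ∑ i : Fin m, P j0 i.succ * u.reverse.getD (i : ℕ) 0 := by
        intro x u
        apply Finset.sum_congr rfl
        intro i _
        simp
      rw [this, this] at hbj
      exact add_right_cancel hbj
  apply List.ext_getElem hL
  intro i hi1 hi2
  exact key i hi1
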